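/- (Theorem 5.6, prior-guided caching advantage.) Let C_c > C_l ≥ 0 be reals (compute cost and lookup cost) and set ρ = C_c − C_l. For a set C ⊆ Fin M define the expected per-request cost cost(C) = (1 − ∑_{i ∈ C} p_i)·C_c + (∑_{i ∈ C} p_i)·C_l, and let C^prior = (1 − p*)·C_c + p*·C_l be the cost of the prior-guided cache {1, …, K}. Fix T ≥ 1 and let C_T be any random subset of Fin M that is a measurable function of (r_1, …, r_T), satisfies |C_T| ≤ K, and contains only previously requested items: C_T ⊆ {r_1, …, r_T}. Then 𝔼[cost(C_T)] − C^prior ≥ Δ·ρ·(1 − T·p_K). In particular the expected advantage of the prior-guided cache is strictly positive whenever Δ > 0 and T < 1/p_K. -/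

import Mathlib

open MeasureTheory ProbabilityTheory Finset

/-- Combinatorial core: a set of size at most `K` has `p`-mass at most the top-`K`
mass, and at most top-`K` mass minus `Δ` if it misses item `K-1`. -/
lemma cache_mass_bound {M K : ℕ} (hK1 : 1 ≤ K) (hKM : K < M)
    (p : Fin M → ℝ)
    (hmono : ∀ i j : Fin M, i ≤ j → p j ≤ p i)
    (hpos : ∀ j : Fin M, 0 < p j)
    (C : Finset (Fin M)) (hC : C.card ≤ K) :
    (∑ i ∈ C, p i ≤ ∑ j ∈ Finset.univ.filter (fun j : Fin M => (j : ℕ) < K), p j) ∧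
    ((⟨K - 1, by omega⟩ : Fin M) ∉ C →
      ∑ i ∈ C, p i ≤ (∑ j ∈ Finset.univ.filter (fun j : Fin M => (j : ℕ) < K), p j)
        - (p ⟨K - 1, by omega⟩ - p ⟨K, hKM⟩)) := by
  classical
  set j0 : Fin M := ⟨K - 1, by omega⟩ with hj0
  set jK : Fin M := ⟨K, hKM⟩ with hjK
  set Q : Finset (Fin M) := Finset.univ.filter (fun j : Fin M => (j : ℕ) < K) with hQ
  have hQIio : Q = Finset.Iio jK := by
    ext j; simp [hQ, Fin.lt_def, hjK]
  have hQcard : Q.card = K := by rw [hQIio, Fin.card_Iio]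
  -- split sums
  have hsplitQ : ∑ j ∈ Q ∩ C, p j + ∑ j ∈ Q \ C, p j = ∑ j ∈ Q, p j :=
    Finset.sum_inter_add_sum_sdiff Q C p
  have hsplitC : ∑ j ∈ C ∩ Q, p j + ∑ j ∈ C \ Q, p j = ∑ j ∈ C, p j :=
    Finset.sum_inter_add_sum_sdiff C Q p
  have hintercomm : ∑ j ∈ C ∩ Q, p j = ∑ j ∈ Q ∩ C, p j := by rw [Finset.inter_comm]
  set m : ℕ := (Q \ C).card with hm
  set n : ℕ := (C \ Q).card with hn
  have hnm : n ≤ m := by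
    have h2 : (C \ Q).card + (C ∩ Q).card = C.card := Finset.card_sdiff_add_card_inter C Q
    have h3 : (Q \ C).card + (Q ∩ C).card = Q.card := Finset.card_sdiff_add_card_inter Q C
    have h4 : (C ∩ Q).card = (Q ∩ C).card := by rw [Finset.inter_comm]
    omega
  -- lower bound on sum over Q \ C
  have hQC : (m : ℝ) * p j0 ≤ ∑ j ∈ Q \ C, p j := by
    have := Finset.card_nsmul_le_sum (Q \ C) p (p j0) ?_
    · simpa [nsmul_eq_mul, hm] using this
    · intro j hj
      apply hmono
      have hjQ : j ∈ Q := (Finset.mem_sdiff.mp hj).1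
      have : (j : ℕ) < K := by simpa [hQ] using hjQ
      exact Fin.le_def.mpr (show (j : ℕ) ≤ K - 1 by omega)
  -- upper bound on sum over C \ Q
  have hCQ : ∑ j ∈ C \ Q, p j ≤ (n : ℝ) * p jK := by
    have := Finset.sum_le_card_nsmul (C \ Q) p (p jK) ?_
    · simpa [nsmul_eq_mul, hn] using this
    · intro j hj
      apply hmono
      have hjQ : j ∉ Q := (Finset.mem_sdiff.mp hj).2
      have : ¬ (j : ℕ) < K := by simpa [hQ] using hjQ
      exact Fin.le_def.mpr (show K ≤ (j : ℕ) by omega)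
  have hdiff : ∑ j ∈ Q, p j - ∑ i ∈ C, p i = ∑ j ∈ Q \ C, p j - ∑ j ∈ C \ Q, p j := by
    linarith [hsplitQ, hsplitC, hintercomm]
  have hpj0 : 0 < p j0 := hpos j0
  have hpjK : 0 < p jK := hpos jK
  have hmon0K : p jK ≤ p j0 := hmono j0 jK (Fin.le_def.mpr (show K - 1 ≤ K by omega))
  have hnmR : (n : ℝ) ≤ (m : ℝ) := by exact_mod_cast hnm
  constructor
  · nlinarith [hQC, hCQ, hdiff, mul_le_mul_of_nonneg_left hmon0K (by positivity : (0:ℝ) ≤ (m:ℝ))]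
  · intro hj0C
    have hj0Q : j0 ∈ Q := Finset.mem_filter.mpr ⟨Finset.mem_univ _, show K - 1 < K by omega⟩
    have hm1 : 1 ≤ m := by
      rw [hm]
      exact Finset.card_pos.mpr ⟨j0, Finset.mem_sdiff.mpr ⟨hj0Q, hj0C⟩⟩
    have hm1R : (1 : ℝ) ≤ (m : ℝ) := by exact_mod_cast hm1
    nlinarith [hQC, hCQ, hdiff, mul_nonneg (by linarith : (0:ℝ) ≤ (m:ℝ) - 1) (by linarith : (0:ℝ) ≤ p j0 - p jK),
      mul_nonneg (by linarith : (0:ℝ) ≤ (m:ℝ) - (n:ℝ)) hpjK.le]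

/-- **Prior-guided caching advantage, Theorem 5.6.**
Requests `(r_k)` are i.i.d. over `Fin M` with probabilities `p_1 ≥ ⋯ ≥ p_M > 0`
summing to one (0-indexed as `p : Fin M → ℝ`); `1 ≤ K < M`, `Δ = p_K - p_{K+1}`,
`p* = ∑_{j=1}^K p_j`.  Costs `C_c > C_l ≥ 0`, `ρ = C_c - C_l`; the per-request cost of
a cache `C` is `(1 - ∑_{i ∈ C} p_i)·C_c + (∑_{i ∈ C} p_i)·C_l`, and
`C^prior = (1 - p*)·C_c + p*·C_l`.  If `C_T` is any random cache that is a measurable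
function of `(r_1, …, r_T)`, has size at most `K`, and contains only previously
requested items, then `𝔼[cost(C_T)] - C^prior ≥ Δ·ρ·(1 - T·p_K)`; in particular the
expected advantage is strictly positive whenever `Δ > 0` and `T < 1/p_K`. -/
theorem prior_guided_caching_advantage {Ω : Type*} [MeasurableSpace Ω]
    (μ : Measure Ω) [IsProbabilityMeasure μ]
    (M : ℕ) (p : Fin M → ℝ)
    (hmono : ∀ i j : Fin M, i ≤ j → p j ≤ p i)
    (hpos : ∀ j : Fin M, 0 < p j)
    (hsum : ∑ j, p j = 1)
    (r : ℕ → Ω → Fin M)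
    (hmeas : ∀ k, Measurable (r k))
    (hindep : iIndepFun r μ)
    (hdist : ∀ (k : ℕ) (j : Fin M), μ {ω | r k ω = j} = ENNReal.ofReal (p j))
    (K : ℕ) (hK1 : 1 ≤ K) (hKM : K < M)
    (Cc Cl : ℝ) (hCl : 0 ≤ Cl) (hClCc : Cl < Cc)
    (T : ℕ) (hT : 1 ≤ T)
    (CT : Ω → Finset (Fin M))
    (hfun : ∃ F : (Fin T → Fin M) → Finset (Fin M),
      ∀ ω, CT ω = F (fun k => r (k : ℕ) ω))
    (hcard : ∀ ω, (CT ω).card ≤ K)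
    (hseen : ∀ ω, ∀ i ∈ CT ω, ∃ k < T, r k ω = i) :
    ((p ⟨K - 1, by omega⟩ - p ⟨K, hKM⟩) * (Cc - Cl) * (1 - (T : ℝ) * p ⟨K - 1, by omega⟩)
      ≤ (∫ ω, ((1 - ∑ i ∈ CT ω, p i) * Cc + (∑ i ∈ CT ω, p i) * Cl) ∂μ)
          - ((1 - ∑ j ∈ Finset.univ.filter (fun j : Fin M => (j : ℕ) < K), p j) * Cc
              + (∑ j ∈ Finset.univ.filter (fun j : Fin M => (j : ℕ) < K), p j) * Cl)) ∧
    (0 < p ⟨K - 1, by omega⟩ - p ⟨K, hKM⟩ → (T : ℝ) < 1 / p ⟨K - 1, by omega⟩ →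
      0 < (∫ ω, ((1 - ∑ i ∈ CT ω, p i) * Cc + (∑ i ∈ CT ω, p i) * Cl) ∂μ)
            - ((1 - ∑ j ∈ Finset.univ.filter (fun j : Fin M => (j : ℕ) < K), p j) * Cc
                + (∑ j ∈ Finset.univ.filter (fun j : Fin M => (j : ℕ) < K), p j) * Cl)) := by
  classical
  obtain ⟨F, hF⟩ := hfun
  set j0 : Fin M := ⟨K - 1, by omega⟩ with hj0
  set jK : Fin M := ⟨K, hKM⟩ with hjK
  set Q : Finset (Fin M) := Finset.univ.filter (fun j : Fin M => (j : ℕ) < K) with hQ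
  set pQ : ℝ := ∑ j ∈ Q, p j with hpQ
  set Δ : ℝ := p j0 - p jK with hΔ
  set f : Ω → ℝ := fun ω => ∑ i ∈ CT ω, p i with hfdef
  set A : Set Ω := {ω | ∀ k < T, r k ω ≠ j0} with hA
  have hΔ0 : 0 ≤ Δ := by
    have := hmono j0 jK (Fin.le_def.mpr (show K - 1 ≤ K by omega))
    linarith
  have hpj0 : 0 < p j0 := hpos j0
  -- measurability of A
  have hAeq : A = ⋂ k ∈ Finset.range T, (r k ⁻¹' {j0})ᶜ := by
    ext ω; simp [hA]
  have hAmeas : MeasurableSet A := by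
    rw [hAeq]
    exact Finset.measurableSet_biInter _ (fun k _ => ((hmeas k) (measurableSet_singleton j0)).compl)
  -- union bound: μ Aᶜ ≤ T * p j0
  have hAc : Aᶜ = ⋃ k ∈ Finset.range T, r k ⁻¹' {j0} := by
    rw [hAeq]; simp
  have hμAc : μ Aᶜ ≤ ENNReal.ofReal ((T : ℝ) * p j0) := by
    rw [hAc]
    calc μ (⋃ k ∈ Finset.range T, r k ⁻¹' {j0})
        ≤ ∑ k ∈ Finset.range T, μ (r k ⁻¹' {j0}) := measure_biUnion_finset_le _ _
      _ = ∑ k ∈ Finset.range T, ENNReal.ofReal (p j0) := by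
          refine Finset.sum_congr rfl fun k _ => ?_
          have : r k ⁻¹' {j0} = {ω | r k ω = j0} := by ext ω; simp
          rw [this, hdist]
      _ = (T : ℕ) • ENNReal.ofReal (p j0) := by simp
      _ = ENNReal.ofReal ((T : ℝ) * p j0) := by
          rw [nsmul_eq_mul, ← ENNReal.ofReal_natCast T,
            ← ENNReal.ofReal_mul (by positivity)]
  have hμA_fin : μ A ≠ ⊤ := measure_ne_top μ A
  have hμAc_fin : μ Aᶜ ≠ ⊤ := measure_ne_top μ Aᶜ
  have hsumone : (μ A).toReal + (μ Aᶜ).toReal = 1 := by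
    rw [← ENNReal.toReal_add hμA_fin hμAc_fin]
    rw [measure_add_measure_compl hAmeas]
    simp
  have hAcReal : (μ Aᶜ).toReal ≤ (T : ℝ) * p j0 :=
    ENNReal.toReal_le_of_le_ofReal (by positivity) hμAc
  have hAlow : 1 - (T : ℝ) * p j0 ≤ (μ A).toReal := by linarith
  -- pointwise bound on f
  have hptwise : ∀ ω, f ω ≤ pQ - Δ * A.indicator 1 ω := by
    intro ω
    by_cases hω : ω ∈ A
    · have hind : A.indicator (1 : Ω → ℝ) ω = 1 := Set.indicator_of_mem hω 1
      have hj0notin : j0 ∉ CT ω := by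
        intro hmem
        obtain ⟨k, hk, hrk⟩ := hseen ω j0 hmem
        exact (hω k hk) hrk
      have := (cache_mass_bound hK1 hKM p hmono hpos (CT ω) (hcard ω)).2 hj0notin
      rw [hind]
      simpa [hfdef, hpQ, hQ, hΔ, hj0, hjK] using this
    · have hind : A.indicator (1 : Ω → ℝ) ω = 0 := Set.indicator_of_notMem hω 1
      have := (cache_mass_bound hK1 hKM p hmono hpos (CT ω) (hcard ω)).1
      rw [hind]
      simpa [hfdef, hpQ, hQ] using this
  -- measurability and integrability of f
  have hfm : Measurable f := by
    have : f = (fun x : Fin T → Fin M => ∑ i ∈ F x, p i) ∘ (fun ω k => r (k : ℕ) ω) := by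
      funext ω; simp [hfdef, hF ω]
    rw [this]
    exact (measurable_of_countable _).comp (measurable_pi_lambda _ fun k => hmeas k)
  have hf01 : ∀ ω, 0 ≤ f ω ∧ f ω ≤ 1 := by
    intro ω
    constructor
    · exact Finset.sum_nonneg fun i _ => (hpos i).le
    · calc f ω ≤ ∑ i, p i :=
            Finset.sum_le_sum_of_subset_of_nonneg (Finset.subset_univ _)
              (fun i _ _ => (hpos i).le)
        _ = 1 := hsum
  have hfint : Integrable f μ := by
    refine Integrable.mono' (integrable_const 1) hfm.aestronglyMeasurable ?_
    filter_upwards with ω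
    rw [Real.norm_eq_abs, abs_le]
    exact ⟨by linarith [(hf01 ω).1], (hf01 ω).2⟩
  have hgint : Integrable (fun ω => pQ - Δ * A.indicator 1 ω) μ := by
    exact (integrable_const pQ).sub (((integrable_const (1:ℝ)).indicator hAmeas).const_mul Δ)
  -- integral bound
  have hintf : ∫ ω, f ω ∂μ ≤ pQ - Δ * (μ A).toReal := by
    calc ∫ ω, f ω ∂μ ≤ ∫ ω, (pQ - Δ * A.indicator 1 ω) ∂μ :=
          integral_mono hfint hgint hptwise
      _ = (∫ _ω, pQ ∂μ) - ∫ ω, Δ * A.indicator 1 ω ∂μ := by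
          exact integral_sub (integrable_const pQ)
            (by exact ((integrable_const (1:ℝ)).indicator hAmeas).const_mul Δ)
      _ = pQ - Δ * (μ A).toReal := by
          rw [integral_const, integral_const_mul, integral_indicator_one hAmeas]
          simp [Measure.real]
  -- rewrite the cost integral
  have hcost : (∫ ω, ((1 - ∑ i ∈ CT ω, p i) * Cc + (∑ i ∈ CT ω, p i) * Cl) ∂μ)
      = Cc - (Cc - Cl) * ∫ ω, f ω ∂μ := by
    have heq : (fun ω => (1 - ∑ i ∈ CT ω, p i) * Cc + (∑ i ∈ CT ω, p i) * Cl)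
        = fun ω => Cc - (Cc - Cl) * f ω := by
      funext ω; simp only [hfdef]; ring
    rw [heq, integral_sub (integrable_const Cc) (hfint.const_mul _), integral_const,
      integral_const_mul]
    simp
  set I : ℝ := ∫ ω, f ω ∂μ with hI
  have hρ : 0 < Cc - Cl := by linarith
  have hkey : Δ * (1 - (T : ℝ) * p j0) ≤ pQ - I := by
    have h1 : Δ * (1 - (T : ℝ) * p j0) ≤ Δ * (μ A).toReal :=
      mul_le_mul_of_nonneg_left hAlow hΔ0
    linarith
  have hmain : Δ * (Cc - Cl) * (1 - (T : ℝ) * p j0)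
      ≤ (∫ ω, ((1 - ∑ i ∈ CT ω, p i) * Cc + (∑ i ∈ CT ω, p i) * Cl) ∂μ)
          - ((1 - pQ) * Cc + pQ * Cl) := by
    rw [hcost]
    have := mul_le_mul_of_nonneg_left hkey hρ.le
    nlinarith [this]
  constructor
  · exact hmain
  · intro hΔpos hTlt
    have hTp : (T : ℝ) * p j0 < 1 := by
      have := (lt_div_iff₀ hpj0).mp hTlt
      linarith
    have hpos' : 0 < Δ * (Cc - Cl) * (1 - (T : ℝ) * p j0) := by
      apply mul_pos (mul_pos hΔpos hρ)
      linarith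
    calc (0:ℝ) < Δ * (Cc - Cl) * (1 - (T : ℝ) * p j0) := hpos'
      _ ≤ _ := hmain
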